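/- For all positive integers p and q with p ≥ q, the maximum covering radius over all relabelings of the (p,q)-type group satisfies L_max(G_{p,q}) ≤ p + ⌊(√(q + 1/4) − 1/2)²⌋. -/

import Mathlib

open Equiv

/-- The ℓ∞-distance between two permutations of `Fin n`. -/
noncomputable def linfDist {n : ℕ} (f g : Perm (Fin n)) : ℕ :=
  Finset.univ.sup fun i : Fin n => (((f i).val : ℤ) - ((g i).val : ℤ)).natAbs

/-- The distance from a permutation to a code `C`. -/
noncomputable def distToCode {n : ℕ} (f : Perm (Fin n)) (C : Set (Perm (Fin n))) : ℕ :=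
  sInf (linfDist f '' C)

/-- The covering radius of a code `C ⊆ Sₙ`. -/
noncomputable def coveringRadius {n : ℕ} (C : Set (Perm (Fin n))) : ℕ :=
  sSup (Set.range fun f : Perm (Fin n) => distToCode f C)

/-- The relabeling `C^π = π C π⁻¹`. -/
def conjCode {n : ℕ} (π : Perm (Fin n)) (C : Set (Perm (Fin n))) : Set (Perm (Fin n)) :=
  (fun g => π * g * π⁻¹) '' C

/-- Maximum covering radius over all relabelings. -/
noncomputable def Lmax {n : ℕ} (C : Set (Perm (Fin n))) : ℕ :=
  sSup (Set.range fun π : Perm (Fin n) => coveringRadius (conjCode π C))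

/-- Minimum covering radius over all relabelings. -/
noncomputable def Lmin {n : ℕ} (C : Set (Perm (Fin n))) : ℕ :=
  sInf (Set.range fun π : Perm (Fin n) => coveringRadius (conjCode π C))

/-- The `(p,q)`-type group `G_{p,q} = ⟨(1,…,p), (p+1,…,p+q)⟩ ⊆ S_{p+q}`
(using `0`-indexed `Fin (p+q)`). -/
def Gpq (p q : ℕ) : Subgroup (Perm (Fin (p + q))) :=
  Subgroup.closure
    { ((List.finRange p).map (Fin.castLE (Nat.le_add_right p q))).formPerm,
      ((List.finRange q).map (Fin.natAdd p)).formPerm }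

/-- The transitive cyclic group `Gₙ = ⟨(1,2,…,n)⟩`. -/
def Gcyc (n : ℕ) : Subgroup (Perm (Fin n)) := Subgroup.closure {finRotate n}

/-- The natural dihedral group
`Dₙ = ⟨(1,2,…,n), ∏_{i=1}^{⌊n/2⌋} (i, n-i)⟩` (using `0`-indexed `Fin n`). -/
def Dn (n : ℕ) : Subgroup (Perm (Fin n)) :=
  Subgroup.closure
    { finRotate n,
      (((List.finRange (n / 2)).map fun i =>
        Equiv.swap (⟨i.val, by have := i.isLt; omega⟩ : Fin n)
          (⟨n - 2 - i.val, by have := i.isLt; omega⟩ : Fin n)).prod) }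


/-- Conjugation of a `formPerm` relabels the list. -/
lemma formPerm_conj {α : Type*} [DecidableEq α] (π : Perm α) :
    ∀ l : List α, π * l.formPerm * π⁻¹ = (l.map π).formPerm
  | [] => by simp
  | [x] => by simp
  | x :: y :: l => by
    have h := formPerm_conj π (y :: l)
    simp only [List.formPerm_cons_cons, List.map_cons] at h ⊢
    rw [show π * (Equiv.swap x y * (y :: l).formPerm) * π⁻¹
        = (π * Equiv.swap x y * π⁻¹) * (π * (y :: l).formPerm * π⁻¹) by group,
      ← Equiv.swap_apply_apply, h]

lemma gauss (R : ℕ) : 2 * ∑ j ∈ Finset.range R, (R - j) = R * (R + 1) := by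
  induction R with
  | zero => simp
  | succ R ih =>
    have h1 : ∀ j ∈ Finset.range R, (R + 1 - j) = (R - j) + 1 := fun j hj => by
      have := Finset.mem_range.1 hj; omega
    rw [Finset.sum_range_succ, Finset.sum_congr rfl h1, Finset.sum_add_distrib,
      Finset.sum_const, Finset.card_range, smul_eq_mul]
    have hx : (R+1)*(R+1+1) = R*(R+1) + 2*(R+1) := by ring
    omega

lemma gauss_le (R N : ℕ) : 2 * ∑ j ∈ Finset.range N, (R - j) ≤ R * (R + 1) := by
  rcases le_total N R with h | h
  · have h2 : ∑ j ∈ Finset.range N, (R - j) ≤ ∑ j ∈ Finset.range R, (R - j) :=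
      Finset.sum_le_sum_of_subset (Finset.range_subset_range.2 h)
    have h3 := gauss R
    omega
  · rw [← Finset.sum_subset (Finset.range_subset_range.2 h)
      (fun j _ hj => by rw [Finset.mem_range] at hj; omega)]
    exact (gauss R).le

/-- The number of "far" pairs in `Fin n` is at most `R*(R+1)`. -/
lemma count_bound {n R M : ℕ} (h : n ≤ M + 1 + R) :
    ∑ v : Fin n, (Finset.univ.filter
      (fun w : Fin n => M < ((v.val : ℤ) - (w.val : ℤ)).natAbs)).card ≤ R * (R + 1) := by
  have hv : ∀ v : Fin n, (Finset.univ.filter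
      (fun w : Fin n => M < ((v.val : ℤ) - (w.val : ℤ)).natAbs)).card
      ≤ (v.val - M) + (R - v.val) := by
    intro v
    have hsub : (Finset.univ.filter
        (fun w : Fin n => M < ((v.val : ℤ) - (w.val : ℤ)).natAbs)) ⊆
        (Finset.univ.filter (fun w : Fin n => w.val + M + 1 ≤ v.val)) ∪
        (Finset.univ.filter (fun w : Fin n => v.val + M + 1 ≤ w.val)) := by
      intro w hw
      simp only [Finset.mem_filter, Finset.mem_union, Finset.mem_univ, true_and] at hw ⊢
      omega
    have h1 : (Finset.univ.filter (fun w : Fin n => w.val + M + 1 ≤ v.val)).card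
        ≤ (Finset.range (v.val - M)).card := by
      apply Finset.card_le_card_of_injOn (fun (w : Fin n) => w.val)
      · intro w hw
        simp only [Finset.mem_coe, Finset.mem_filter] at hw
        simp only [Finset.mem_coe, Finset.mem_range]
        omega
      · intro a _ b _ hab
        exact Fin.val_injective hab
    rw [Finset.card_range] at h1
    have h2 : (Finset.univ.filter (fun w : Fin n => v.val + M + 1 ≤ w.val)).card
        ≤ (Finset.range (R - v.val)).card := by
      apply Finset.card_le_card_of_injOn (fun (w : Fin n) => w.val - (v.val + M + 1))
      · intro w hw
        simp only [Finset.mem_coe, Finset.mem_filter] at hw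
        simp only [Finset.mem_coe, Finset.mem_range]
        have := w.isLt
        omega
      · intro a ha b hb hab
        rw [Finset.coe_filter, Set.mem_setOf_eq] at ha hb
        apply Fin.val_injective
        simp only at hab
        omega
    rw [Finset.card_range] at h2
    calc _ ≤ _ := Finset.card_le_card hsub
      _ ≤ _ := Finset.card_union_le _ _
      _ ≤ (v.val - M) + (R - v.val) := by omega
  calc ∑ v : Fin n, (Finset.univ.filter
        (fun w : Fin n => M < ((v.val : ℤ) - (w.val : ℤ)).natAbs)).card
      ≤ ∑ v : Fin n, ((v.val - M) + (R - v.val)) := Finset.sum_le_sum fun v _ => hv v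
    _ = (∑ j ∈ Finset.range n, (j - M)) + (∑ j ∈ Finset.range n, (R - j)) := by
        rw [← Finset.sum_add_distrib, ← Fin.sum_univ_eq_sum_range]
    _ ≤ (∑ j ∈ Finset.range n, (R - (n - 1 - j))) + (∑ j ∈ Finset.range n, (R - j)) := by
        apply Nat.add_le_add_right
        apply Finset.sum_le_sum
        intro j hj
        rw [Finset.mem_range] at hj
        omega
    _ = (∑ j ∈ Finset.range n, (R - j)) + (∑ j ∈ Finset.range n, (R - j)) := by
        rw [Finset.sum_range_reflect (fun j => R - j) n]
    _ ≤ R * (R + 1) := by have := gauss_le R n; omega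

/-- Core pigeonhole: some power of `L.formPerm` is close to `f` on all of `L`. -/
lemma core_exists {n : ℕ} (f : Perm (Fin n)) (L : List (Fin n)) (hnd : L.Nodup) (M : ℕ)
    (hcount : ∑ v : Fin n, (Finset.univ.filter
      (fun w : Fin n => M < ((v.val : ℤ) - (w.val : ℤ)).natAbs)).card < L.length) :
    ∃ s : ℕ, ∀ i ∈ L, (((f i).val : ℤ) - (((L.formPerm ^ s) i).val : ℤ)).natAbs ≤ M := by
  set ℓ := L.length with hℓdef
  have hℓ : 0 < ℓ := lt_of_le_of_lt (Nat.zero_le _) hcount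
  set c : Fin n → ℕ := fun v => (Finset.univ.filter
      (fun w : Fin n => M < ((v.val : ℤ) - (w.val : ℤ)).natAbs)).card with hc
  set Bad : Finset ℕ := (Finset.range ℓ).filter (fun s => ∃ k : Fin ℓ,
      M < (((f (L.get k)).val : ℤ) -
        ((L.get ⟨(k.val + s) % ℓ, Nat.mod_lt _ hℓ⟩).val : ℤ)).natAbs) with hBad
  have hgetinj : Function.Injective L.get := List.nodup_iff_injective_get.1 hnd
  have hBadk : ∀ k : Fin ℓ, ((Finset.range ℓ).filter (fun s =>
      M < (((f (L.get k)).val : ℤ) -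
        ((L.get ⟨(k.val + s) % ℓ, Nat.mod_lt _ hℓ⟩).val : ℤ)).natAbs)).card
      ≤ c (f (L.get k)) := by
    intro k
    apply Finset.card_le_card_of_injOn
      (fun s => L.get ⟨(k.val + s) % ℓ, Nat.mod_lt _ hℓ⟩)
    · intro s hs
      rw [Finset.mem_coe, Finset.mem_filter] at hs
      rw [Finset.mem_coe, Finset.mem_filter]
      exact ⟨Finset.mem_univ _, hs.2⟩
    · intro s₁ h₁ s₂ h₂ hss
      rw [Finset.coe_filter, Set.mem_setOf_eq, Finset.mem_range] at h₁ h₂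
      have h3 := hgetinj hss
      have h4 : (k.val + s₁) % ℓ = (k.val + s₂) % ℓ := congrArg Fin.val h3
      have h5 : s₁ % ℓ = s₂ % ℓ := Nat.ModEq.add_left_cancel' k.val h4
      rwa [Nat.mod_eq_of_lt h₁.1, Nat.mod_eq_of_lt h₂.1] at h5
  have hsum : ∑ k : Fin ℓ, c (f (L.get k)) ≤ ∑ v : Fin n, c v := by
    have hinj : ∀ a ∈ (Finset.univ : Finset (Fin ℓ)), ∀ b ∈ Finset.univ,
        f (L.get a) = f (L.get b) → a = b := fun a _ b _ hab => hgetinj (f.injective hab)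
    have him := Finset.sum_image (s := (Finset.univ : Finset (Fin ℓ)))
      (g := fun k => f (L.get k)) (f := c) hinj
    rw [← him]
    exact Finset.sum_le_sum_of_subset (Finset.subset_univ _)
  have hBadcard : Bad.card < ℓ := by
    have h6 : Bad ⊆ Finset.univ.biUnion (fun k : Fin ℓ => (Finset.range ℓ).filter (fun s =>
        M < (((f (L.get k)).val : ℤ) -
          ((L.get ⟨(k.val + s) % ℓ, Nat.mod_lt _ hℓ⟩).val : ℤ)).natAbs)) := by
      intro s hs
      rw [hBad, Finset.mem_filter] at hs
      obtain ⟨k, hk⟩ := hs.2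
      rw [Finset.mem_biUnion]
      exact ⟨k, Finset.mem_univ _, Finset.mem_filter.2 ⟨hs.1, hk⟩⟩
    calc Bad.card ≤ _ := Finset.card_le_card h6
      _ ≤ ∑ k : Fin ℓ, ((Finset.range ℓ).filter (fun s =>
          M < (((f (L.get k)).val : ℤ) -
            ((L.get ⟨(k.val + s) % ℓ, Nat.mod_lt _ hℓ⟩).val : ℤ)).natAbs)).card :=
        Finset.card_biUnion_le
      _ ≤ ∑ k : Fin ℓ, c (f (L.get k)) := Finset.sum_le_sum fun k _ => hBadk k
      _ ≤ ∑ v : Fin n, c v := hsum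
      _ < ℓ := hcount
  have hex : ∃ s ∈ Finset.range ℓ, s ∉ Bad := by
    by_contra hcon
    push_neg at hcon
    have : (Finset.range ℓ).card ≤ Bad.card :=
      Finset.card_le_card fun s hs => hcon s hs
    rw [Finset.card_range] at this
    omega
  obtain ⟨s, _, hsBad⟩ := hex
  refine ⟨s, fun i hi => ?_⟩
  obtain ⟨k, hk⟩ := List.mem_iff_get.1 hi
  rw [hBad, Finset.mem_filter, not_and] at hsBad
  have h7 := hsBad ‹s ∈ Finset.range ℓ›
  push_neg at h7
  have h8 := h7 k
  rw [← hk]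
  have h9 := List.formPerm_pow_apply_getElem L hnd s k.val k.isLt
  simp only [List.get_eq_getElem] at h8 ⊢
  rw [h9]
  exact h8

set_option maxHeartbeats 2000000 in
lemma formPerm_pow_mem {α : Type*} [DecidableEq α] {l : List α} {x : α} (h : x ∈ l) (t : ℕ) :
    (l.formPerm ^ t) x ∈ l := by
  induction t with
  | zero => simpa
  | succ t ih =>
    rw [pow_succ', Equiv.Perm.mul_apply]
    exact List.formPerm_apply_mem_of_mem ih

/-- For all positive integers `p ≥ q`,
`L_max(G_{p,q}) ≤ p + ⌊(√(q + 1/4) − 1/2)²⌋`. -/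
theorem stmt_5 (p q : ℕ) (hq : 1 ≤ q) (hpq : q ≤ p) :
    (Lmax (Gpq p q : Set (Perm (Fin (p + q)))) : ℤ) ≤
      (p : ℤ) + ⌊(Real.sqrt ((q : ℝ) + 1 / 4) - 1 / 2) ^ 2⌋ := by
  classical
  -- choose r with r(r+1) < q ≤ (r+1)(r+2)
  have hex : ∃ r : ℕ, q ≤ (r + 1) * (r + 2) := ⟨q, by nlinarith⟩
  set r := Nat.find hex with hrdef
  have hr2 : q ≤ (r + 1) * (r + 2) := Nat.find_spec hex
  have hr1 : r * (r + 1) < q := by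
    by_contra hcon
    push_neg at hcon
    have hrpos : 0 < r := by
      by_contra h0
      push_neg at h0
      have h00 : r = 0 := by omega
      rw [h00] at hcon
      simp at hcon
      omega
    have hmin := Nat.find_min hex (show r - 1 < r by omega)
    apply hmin
    calc q ≤ r * (r + 1) := hcon
      _ = (r - 1 + 1) * (r - 1 + 2) := by congr 1 <;> omega
  have hrq : r + 1 ≤ q := by nlinarith
  set M := p + (q - 1 - r) with hMdef
  -- the base lists
  set LA : List (Fin (p + q)) :=
    (List.finRange p).map (Fin.castLE (Nat.le_add_right p q)) with hLA
  set LB : List (Fin (p + q)) := (List.finRange q).map (Fin.natAdd p) with hLB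
  have hLAnd : LA.Nodup := (List.nodup_finRange p).map
    (fun a b hab => Fin.ext (by simpa using congrArg Fin.val hab))
  have hLBnd : LB.Nodup := (List.nodup_finRange q).map
    (fun a b hab => Fin.ext (by
      have := congrArg Fin.val hab
      simp [Fin.natAdd] at this
      exact this))
  have hLAlen : LA.length = p := by simp [hLA]
  have hLBlen : LB.length = q := by simp [hLB]
  have hmemLA : ∀ i : Fin (p + q), i ∈ LA ↔ i.val < p := by
    intro i
    constructor
    · intro hi
      obtain ⟨j, _, rfl⟩ := List.mem_map.1 hi
      simpa using j.isLt
    · intro hi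
      exact List.mem_map.2 ⟨⟨i.val, hi⟩, List.mem_finRange _, Fin.ext (by simp)⟩
  have hmemLB : ∀ i : Fin (p + q), i ∈ LB ↔ p ≤ i.val := by
    intro i
    constructor
    · intro hi
      obtain ⟨j, _, rfl⟩ := List.mem_map.1 hi
      simp [Fin.natAdd]
    · intro hi
      refine List.mem_map.2 ⟨⟨i.val - p, by have := i.isLt; omega⟩, List.mem_finRange _,
        Fin.ext (by simp [Fin.natAdd]; omega)⟩
  -- counting bound
  have hcnt : ∑ v : Fin (p + q), (Finset.univ.filter
      (fun w : Fin (p + q) => M < ((v.val : ℤ) - (w.val : ℤ)).natAbs)).card ≤ r * (r + 1) :=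
    count_bound (by omega)
  -- the key covering bound
  have key : ∀ π : Perm (Fin (p + q)),
      coveringRadius (conjCode π (Gpq p q : Set (Perm (Fin (p + q))))) ≤ M := by
    intro π
    apply csSup_le (Set.range_nonempty _)
    rintro x ⟨f, rfl⟩
    -- relabeled lists
    set KA : List (Fin (p + q)) := LA.map π with hKA
    set KB : List (Fin (p + q)) := LB.map π with hKB
    have hKAnd : KA.Nodup := hLAnd.map π.injective
    have hKBnd : KB.Nodup := hLBnd.map π.injective
    have hKAlen : KA.length = p := by simp [hKA, hLAlen]
    have hKBlen : KB.length = q := by simp [hKB, hLBlen]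
    obtain ⟨s, hsA⟩ := core_exists f KA hKAnd M (by rw [hKAlen]; omega)
    obtain ⟨t, htB⟩ := core_exists f KB hKBnd M (by rw [hKBlen]; omega)
    -- the codeword
    set g : Perm (Fin (p + q)) := π * (LA.formPerm ^ s * LB.formPerm ^ t) * π⁻¹ with hg
    have hconjpow : ∀ (x : Perm (Fin (p + q))) (k : ℕ),
        π * x ^ k * π⁻¹ = (π * x * π⁻¹) ^ k := by
      intro x k
      induction k with
      | zero => simp
      | succ k ih => rw [pow_succ, pow_succ, ← ih]; group
    have hgeq : g = KA.formPerm ^ s * KB.formPerm ^ t := by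
      rw [hg, show π * (LA.formPerm ^ s * LB.formPerm ^ t) * π⁻¹
          = (π * LA.formPerm ^ s * π⁻¹) * (π * LB.formPerm ^ t * π⁻¹) by group,
        hconjpow, hconjpow, formPerm_conj, formPerm_conj]
    have hgC : g ∈ conjCode π (Gpq p q : Set (Perm (Fin (p + q)))) := by
      refine ⟨LA.formPerm ^ s * LB.formPerm ^ t, ?_, rfl⟩
      have hA : LA.formPerm ∈ Gpq p q := Subgroup.subset_closure (Set.mem_insert _ _)
      have hB : LB.formPerm ∈ Gpq p q :=
        Subgroup.subset_closure (Set.mem_insert_of_mem _ rfl)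
      exact SetLike.mem_coe.2 (mul_mem (pow_mem hA s) (pow_mem hB t))
    -- distance estimate
    have hdist : linfDist f g ≤ M := by
      apply Finset.sup_le
      intro i _
      have hcover : i ∈ KA ∨ i ∈ KB := by
        rcases lt_or_ge (π⁻¹ i).val p with hlt | hge
        · left
          have : π (π⁻¹ i) ∈ KA := List.mem_map_of_mem (f := π) ((hmemLA _).2 hlt)
          rwa [← Equiv.Perm.mul_apply, mul_inv_cancel, Equiv.Perm.one_apply] at this
        · right
          have : π (π⁻¹ i) ∈ KB := List.mem_map_of_mem (f := π) ((hmemLB _).2 hge)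
          rwa [← Equiv.Perm.mul_apply, mul_inv_cancel, Equiv.Perm.one_apply] at this
      have hdisj : ∀ j : Fin (p + q), j ∈ KA → j ∈ KB → False := by
        intro j hjA hjB
        obtain ⟨a, ha, rfl⟩ := List.mem_map.1 hjA
        obtain ⟨b, hb, hba⟩ := List.mem_map.1 hjB
        have : b = a := π.injective hba
        rw [this] at hb
        have h1 := (hmemLA _).1 ha
        have h2 := (hmemLB _).1 hb
        omega
      rcases hcover with hiA | hiB
      · have hiB : i ∉ KB := fun hiB => hdisj i hiA hiB
        have hfix : (KB.formPerm ^ t) i = i :=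
          Equiv.Perm.pow_apply_eq_self_of_apply_eq_self
            (List.formPerm_apply_of_notMem hiB) t
        rw [hgeq, Equiv.Perm.mul_apply, hfix]
        exact hsA i hiA
      · have hmem2 : (KB.formPerm ^ t) i ∈ KB := formPerm_pow_mem hiB t
        have hnotA : (KB.formPerm ^ t) i ∉ KA := fun hc => hdisj _ hc hmem2
        have hfix : (KA.formPerm ^ s) ((KB.formPerm ^ t) i) = (KB.formPerm ^ t) i :=
          Equiv.Perm.pow_apply_eq_self_of_apply_eq_self
            (List.formPerm_apply_of_notMem hnotA) s
        rw [hgeq, Equiv.Perm.mul_apply, hfix]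
        exact htB i hiB
    exact le_trans (Nat.sInf_le (Set.mem_image_of_mem _ hgC)) hdist
  -- hence Lmax ≤ M
  have hLmax : Lmax (Gpq p q : Set (Perm (Fin (p + q)))) ≤ M := by
    apply csSup_le (Set.range_nonempty _)
    rintro x ⟨π, rfl⟩
    exact key π
  -- final real-number estimate
  have hfloor : ((q - 1 - r : ℕ) : ℤ) ≤ ⌊(Real.sqrt ((q : ℝ) + 1 / 4) - 1 / 2) ^ 2⌋ := by
    rw [Int.le_floor]
    have hc : (((q - 1 - r : ℕ) : ℤ) : ℝ) = (q : ℝ) - 1 - (r : ℝ) := by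
      have h1 : (q - 1 - r : ℕ) + (1 + r) = q := by omega
      have := congrArg (fun x : ℕ => (x : ℝ)) h1
      push_cast at this ⊢
      linarith
    rw [hc]
    have hpos : (0 : ℝ) ≤ (q : ℝ) + 1 / 4 := by positivity
    have hsq : Real.sqrt ((q : ℝ) + 1 / 4) ^ 2 = (q : ℝ) + 1 / 4 := Real.sq_sqrt hpos
    have hnn := Real.sqrt_nonneg ((q : ℝ) + 1 / 4)
    have hub : Real.sqrt ((q : ℝ) + 1 / 4) ≤ (r : ℝ) + 3 / 2 := by
      have h3 : ((q : ℝ) + 1 / 4) ≤ ((r : ℝ) + 3 / 2) ^ 2 := by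
        have : (q : ℝ) ≤ ((r : ℝ) + 1) * ((r : ℝ) + 2) := by exact_mod_cast hr2
        nlinarith
      calc Real.sqrt ((q : ℝ) + 1 / 4) ≤ Real.sqrt (((r : ℝ) + 3 / 2) ^ 2) :=
            Real.sqrt_le_sqrt h3
        _ = (r : ℝ) + 3 / 2 := Real.sqrt_sq (by positivity)
    nlinarith
  calc (Lmax (Gpq p q : Set (Perm (Fin (p + q)))) : ℤ) ≤ (M : ℤ) := by exact_mod_cast hLmax
    _ = (p : ℤ) + ((q - 1 - r : ℕ) : ℤ) := by rw [hMdef]; push_cast; ring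
    _ ≤ (p : ℤ) + ⌊(Real.sqrt ((q : ℝ) + 1 / 4) - 1 / 2) ^ 2⌋ := by linarith
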